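/- Let a₁ > 0 and t₀ < t₁. Let u : [t₀, t₁) × ℝ → ℝ be continuous, differentiable on (t₀, t₁) × ℝ, and suppose it satisfies the partial differential inequality ∂u/∂t + a₁·u + a₁·∂u/∂y ≤ 0 on (t₀, t₁) × ℝ. Then for every t ∈ [t₀, t₁) and every y ∈ ℝ: u(t, y) ≤ u(t₀, y − a₁(t − t₀))·e^{−a₁(t − t₀)}. -/

import Mathlib

/-- comparison principle for a linear transport-type PDI.
If `u` is continuous on `[t₀,t₁) × ℝ`, differentiable on `(t₀,t₁) × ℝ`, and satisfies
`∂u/∂t + a₁·u + a₁·∂u/∂y ≤ 0` there, then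
`u(t,y) ≤ u(t₀, y − a₁(t−t₀))·e^{−a₁(t−t₀)}` for all `t ∈ [t₀,t₁)` and `y ∈ ℝ`. -/
theorem transport_pdi_comparison
    (a₁ t₀ t₁ : ℝ) (ha₁ : 0 < a₁) (ht : t₀ < t₁)
    (u : ℝ → ℝ → ℝ)
    (hcont : ContinuousOn (fun q : ℝ × ℝ => u q.1 q.2) (Set.Ico t₀ t₁ ×ˢ Set.univ))
    (hdiff : ∀ t ∈ Set.Ioo t₀ t₁, ∀ y : ℝ,
      DifferentiableAt ℝ (fun q : ℝ × ℝ => u q.1 q.2) (t, y))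
    (hPDI : ∀ t ∈ Set.Ioo t₀ t₁, ∀ y : ℝ,
      deriv (fun s => u s y) t + a₁ * u t y + a₁ * deriv (fun z => u t z) y ≤ 0) :
    ∀ t ∈ Set.Ico t₀ t₁, ∀ y : ℝ,
      u t y ≤ u t₀ (y - a₁ * (t - t₀)) * Real.exp (-a₁ * (t - t₀)) := by
  intro t htmem y
  obtain ⟨ht0, ht1⟩ := htmem
  rcases eq_or_lt_of_le ht0 with heq | hlt
  · subst heq
    simp
  -- define g
  set g : ℝ → ℝ := fun s => u s (y - a₁ * (t - s)) * Real.exp (a₁ * (s - t₀)) with hg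
  have key : g t ≤ g t₀ := by
    have hconvex : Convex ℝ (Set.Icc t₀ t) := convex_Icc _ _
    have hgcont : ContinuousOn g (Set.Icc t₀ t) := by
      apply ContinuousOn.mul
      · apply ContinuousOn.comp hcont
          ((Continuous.continuousOn (by fun_prop) :
            ContinuousOn (fun r : ℝ => ((r, y - a₁ * (t - r)) : ℝ × ℝ)) (Set.Icc t₀ t)))
        intro s hs
        simp only [Set.mem_prod, Set.mem_Ico, Set.mem_univ, and_true]
        exact ⟨hs.1, lt_of_le_of_lt hs.2 ht1⟩
      · fun_prop
    have hderiv : ∀ s ∈ interior (Set.Icc t₀ t), deriv g s ≤ 0 := by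
      intro s hs
      rw [interior_Icc] at hs
      have hs' : s ∈ Set.Ioo t₀ t₁ := ⟨hs.1, lt_trans hs.2 ht1⟩
      set ys : ℝ := y - a₁ * (t - s) with hys
      set f : ℝ × ℝ → ℝ := fun q => u q.1 q.2 with hf
      have hd : DifferentiableAt ℝ f (s, ys) := hdiff s hs' ys
      set L := fderiv ℝ f (s, ys) with hL
      have hF : HasFDerivAt f L (s, ys) := hd.hasFDerivAt
      -- curve derivative
      have hcurve : HasDerivAt (fun r : ℝ => ((r, y - a₁ * (t - r)) : ℝ × ℝ)) (1, a₁) s := by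
        apply HasDerivAt.prodMk (hasDerivAt_id s)
        have : HasDerivAt (fun r : ℝ => y - a₁ * (t - r)) (0 - a₁ * (0 - 1)) s := by
          exact (hasDerivAt_const s y).sub (((hasDerivAt_const s t).sub (hasDerivAt_id s)).const_mul a₁)
        simpa using this
      have hcomp : HasDerivAt (fun r => u r (y - a₁ * (t - r))) (L (1, a₁)) s :=
        by have := hF.comp_hasDerivAt s hcurve; exact this
      -- partial derivatives
      have hpt : HasDerivAt (fun r => u r ys) (L (1, 0)) s := by
        have hc : HasDerivAt (fun r : ℝ => ((r, ys) : ℝ × ℝ)) (1, 0) s :=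
          (hasDerivAt_id s).prodMk (hasDerivAt_const s ys)
        exact hF.comp_hasDerivAt s hc
      have hpy : HasDerivAt (fun z => u s z) (L (0, 1)) ys := by
        have hc : HasDerivAt (fun z : ℝ => ((s, z) : ℝ × ℝ)) (0, 1) ys :=
          (hasDerivAt_const ys s).prodMk (hasDerivAt_id ys)
        exact hF.comp_hasDerivAt ys hc
      have hlin : L (1, a₁) = L (1, 0) + a₁ * L (0, 1) := by
        have : ((1 : ℝ), a₁) = (1, 0) + a₁ • ((0 : ℝ), (1 : ℝ)) := by
          simp [Prod.ext_iff]
        rw [this, map_add, map_smul]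
        simp
      have hexp : HasDerivAt (fun s : ℝ => Real.exp (a₁ * (s - t₀)))
          (Real.exp (a₁ * (s - t₀)) * a₁) s := by
        have h1 : HasDerivAt (fun s : ℝ => a₁ * (s - t₀)) a₁ s := by
          simpa using ((hasDerivAt_id s).sub (hasDerivAt_const s t₀)).const_mul a₁
        exact (Real.hasDerivAt_exp (a₁ * (s - t₀))).comp s h1
      have hgd : HasDerivAt g (L (1, a₁) * Real.exp (a₁ * (s - t₀))
          + u s ys * (Real.exp (a₁ * (s - t₀)) * a₁)) s := hcomp.mul hexp
      rw [hgd.deriv]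
      have hPDIs := hPDI s hs' ys
      rw [hpt.deriv, hpy.deriv] at hPDIs
      have hexppos : (0:ℝ) < Real.exp (a₁ * (s - t₀)) := Real.exp_pos _
      rw [hlin]
      nlinarith [hexppos]
    have hanti : AntitoneOn g (Set.Icc t₀ t) := by
      apply antitoneOn_of_deriv_nonpos hconvex hgcont
      · intro s hs
        rw [interior_Icc] at hs
        have hs' : s ∈ Set.Ioo t₀ t₁ := ⟨hs.1, lt_trans hs.2 ht1⟩
        have hd : DifferentiableAt ℝ (fun q : ℝ × ℝ => u q.1 q.2) (s, y - a₁ * (t - s)) :=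
          hdiff s hs' _
        apply DifferentiableAt.differentiableWithinAt
        apply DifferentiableAt.mul
        · have hcurve : DifferentiableAt ℝ (fun r : ℝ => ((r, y - a₁ * (t - r)) : ℝ × ℝ)) s := by
            fun_prop
          exact hd.comp s hcurve
        · fun_prop
      · exact hderiv
    exact hanti (Set.left_mem_Icc.mpr hlt.le) (Set.right_mem_Icc.mpr hlt.le) hlt.le
  have h0 : g t₀ = u t₀ (y - a₁ * (t - t₀)) := by simp [hg]
  have h1 : g t = u t y * Real.exp (a₁ * (t - t₀)) := by simp [hg]
  rw [h0, h1] at key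
  have hexppos : (0:ℝ) < Real.exp (a₁ * (t - t₀)) := Real.exp_pos _
  rw [neg_mul, Real.exp_neg, ← div_eq_mul_inv, le_div_iff₀ hexppos]
  exact key
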